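/- Let $\|\cdot\|$ be a norm on $\mathbb{R}^d$ and let $\nu$ be a Borel probability measure on $\mathbb{R}^d$. For $x\in\mathbb{R}^d$ and $r>0$ write $\bar B_r(x)=\{y:\|y-x\|\le r\}$ and $S_r(x)=\{y:\|y-x\|=r\}$ (the topological boundary of the ball). Then for $\nu$-almost every $x$ one has $\nu(\bar B_r(x))>0$ for all $r>0$ and $\lim_{r\searrow 0}\nu(S_r(x))/\nu(\bar B_r(x))=0$. -/

import Mathlib

open MeasureTheory Filter Topology
open scoped ENNReal

section Aux

variable {E : Type*} [NormedAddCommGroup E] [NormedSpace ℝ E] [FiniteDimensional ℝ E]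

/-- In a finite-dimensional normed space there is no infinite "centered chain":
a sequence of points `x i` together with radii `r i > 0` such that `dist (x j) (x i) = r i`
for all `i < j`. -/
lemma no_infinite_centered_chain (x : ℕ → E) (r : ℕ → ℝ) (hr : ∀ n, 0 < r n)
    (hc : ∀ i j, i < j → dist (x j) (x i) = r i) : False := by
  -- all points (from index 1 on) lie in a compact ball
  have hb : ∀ n : ℕ, x (n + 1) ∈ Metric.closedBall (x 0) (r 0) := by
    intro n
    rw [Metric.mem_closedBall]
    exact le_of_eq (hc 0 (n + 1) (Nat.succ_pos n))
  obtain ⟨z, -, φ, hφ, hφt⟩ :=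
    (isCompact_closedBall (x 0) (r 0)).tendsto_subseq hb
  -- the limit point is at distance exactly `r i` from every `x i`
  have hzd : ∀ i, dist z (x i) = r i := by
    intro i
    have h1 : Tendsto (fun k => dist (x (φ k + 1)) (x i)) atTop (𝓝 (dist z (x i))) :=
      hφt.dist tendsto_const_nhds
    have h2 : ∀ᶠ k in atTop, dist (x (φ k + 1)) (x i) = r i := by
      filter_upwards [eventually_ge_atTop i] with k hk
      exact hc i (φ k + 1) (lt_of_le_of_lt (le_trans hk (hφ.le_apply)) (Nat.lt_succ_self _))
    have h3 : Tendsto (fun _ : ℕ => r i) atTop (𝓝 (dist z (x i))) := h1.congr' h2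
    exact tendsto_nhds_unique h3 tendsto_const_nhds
  -- the radii along the subsequence tend to 0
  have hr0 : Tendsto (fun k => r (φ k + 1)) atTop (𝓝 0) := by
    have h1 : Tendsto (fun k => dist z (x (φ k + 1))) atTop (𝓝 0) := by
      have := (tendsto_const_nhds (x := z) (f := atTop (α := ℕ))).dist hφt
      simpa using this
    exact h1.congr fun k => hzd (φ k + 1)
  -- normalized directions
  set u : ℕ → E := fun n => (r n)⁻¹ • (x n - z) with hu
  have hxz : ∀ n, ‖x n - z‖ = r n := by
    intro n
    rw [← dist_eq_norm, dist_comm]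
    exact hzd n
  have hu1 : ∀ n, u n ∈ Metric.sphere (0 : E) 1 := by
    intro n
    rw [mem_sphere_zero_iff_norm, hu]
    simp only [norm_smul, Real.norm_eq_abs, abs_of_pos (inv_pos.mpr (hr n)), hxz n]
    rw [inv_mul_cancel₀ (hr n).ne']
  obtain ⟨w, -, ψ, hψ, hψt⟩ :=
    (isCompact_sphere (0 : E) 1).tendsto_subseq (fun k => hu1 (φ k + 1))
  set σ : ℕ → ℕ := fun m => φ (ψ m) + 1 with hσ
  have hσmono : StrictMono σ := fun a b hab => Nat.succ_lt_succ (hφ (hψ hab))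
  have hut : Tendsto (fun m => u (σ m)) atTop (𝓝 w) := hψt
  have hr0' : Tendsto (fun m => r (σ m)) atTop (𝓝 0) := hr0.comp hψ.tendsto_atTop
  -- choose two far-apart indices with close directions and decreasing radii
  obtain ⟨M, hM⟩ : ∃ M, ∀ m ≥ M, dist (u (σ m)) w < 1 / 2 := by
    have := (Metric.tendsto_atTop.mp hut) (1 / 2) (by norm_num)
    exact this
  obtain ⟨L, hL1, hL2⟩ : ∃ L, M < L ∧ r (σ L) < r (σ M) := by
    have hev : ∀ᶠ m in atTop, r (σ m) < r (σ M) :=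
      hr0'.eventually (eventually_lt_nhds (hr (σ M)))
    obtain ⟨L, hL⟩ := (hev.and (eventually_gt_atTop M)).exists
    exact ⟨L, hL.2, hL.1⟩
  set a := σ M with ha
  set b := σ L with hb'
  have hab : a < b := hσmono hL1
  have hdist : dist (x b) (x a) = r a := hc a b hab
  have hrec : ∀ n, r n • u n = x n - z := by
    intro n
    rw [hu]
    exact smul_inv_smul₀ (hr n).ne' _
  have hsub : x b - x a = r b • u b - r a • u a := by
    rw [hrec, hrec]
    abel
  have hkey : r b • u b - r a • u a = r b • (u b - u a) + (r b - r a) • u a := by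
    rw [smul_sub, sub_smul]
    abel
  have huab : ‖u b - u a‖ < 1 := by
    have h1 : dist (u b) (u a) ≤ dist (u b) w + dist w (u a) := dist_triangle _ _ _
    have h2 : dist (u b) w < 1 / 2 := hM L (le_of_lt hL1)
    have h3 : dist w (u a) < 1 / 2 := by rw [dist_comm]; exact hM M le_rfl
    rw [← dist_eq_norm]
    linarith
  have hua : ‖u a‖ = 1 := by
    have := hu1 a
    rwa [mem_sphere_zero_iff_norm] at this
  have hbound : r a < r a := by
    calc r a = ‖x b - x a‖ := by rw [← dist_eq_norm, hdist]
    _ = ‖r b • (u b - u a) + (r b - r a) • u a‖ := by rw [hsub, hkey]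
    _ ≤ ‖r b • (u b - u a)‖ + ‖(r b - r a) • u a‖ := norm_add_le _ _
    _ = r b * ‖u b - u a‖ + |r b - r a| * ‖u a‖ := by
        rw [norm_smul, norm_smul, Real.norm_eq_abs, Real.norm_eq_abs,
          abs_of_pos (hr b)]
    _ = r b * ‖u b - u a‖ + (r a - r b) := by
        rw [hua, mul_one, abs_of_neg (by linarith : r b - r a < 0)]
        ring
    _ < r b * 1 + (r a - r b) := by
        have := mul_lt_mul_of_pos_left huab (hr b)
        linarith
    _ = r a := by ring
  exact absurd hbound (lt_irrefl _)

variable [MeasurableSpace E] [BorelSpace E]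

/-- A set is `ν`-clean if every sphere centered at one of its points meets it in
a `ν`-null set. -/
def NuClean (ν : Measure E) (A : Set E) : Prop :=
  ∀ x ∈ A, ∀ r : ℝ, 0 < r → ν (A ∩ Metric.sphere x r) = 0

lemma nuClean_mono {ν : Measure E} {A B : Set E} (hBA : B ⊆ A) (hA : NuClean ν A) :
    NuClean ν B := by
  intro x hx r hror
  exact measure_mono_null (Set.inter_subset_inter_left _ hBA) (hA x (hBA hx) r hror)

/-- Every set of positive measure contains a measurable clean subset of positive measure. -/
lemma exists_clean_subset (ν : Measure E) {U : Set E} (hU : MeasurableSet U)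
    (hpos : 0 < ν U) :
    ∃ A, A ⊆ U ∧ MeasurableSet A ∧ 0 < ν A ∧ NuClean ν A := by
  by_contra hno
  push_neg at hno
  -- every positive measurable subset of U fails to be clean
  set P : Set E → Prop := fun A => A ⊆ U ∧ MeasurableSet A ∧ 0 < ν A with hP
  have key : ∀ A : Set E, P A → ∃ (y : E) (s : ℝ),
      y ∈ A ∧ 0 < s ∧ P (A ∩ Metric.sphere y s) := by
    intro A hA
    have hnc : ¬ NuClean ν A := fun hcl => by
      have := hno A hA.1 hA.2.1 hA.2.2
      exact this hcl
    rw [NuClean] at hnc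
    push_neg at hnc
    obtain ⟨y, hy, s, hs, hne⟩ := hnc
    exact ⟨y, s, hy, hs, Set.inter_subset_left.trans hA.1,
      hA.2.1.inter Metric.isClosed_sphere.measurableSet, pos_iff_ne_zero.mpr hne⟩
  choose! y s hy hs hnext using key
  set M : ℕ → Set E := fun n => Nat.rec U (fun _ Mn => Mn ∩ Metric.sphere (y Mn) (s Mn)) n
    with hM
  have hM0 : M 0 = U := rfl
  have hMsucc : ∀ n, M (n + 1) = M n ∩ Metric.sphere (y (M n)) (s (M n)) := fun n => rfl
  have hPM : ∀ n, P (M n) := by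
    intro n
    induction n with
    | zero => exact ⟨le_refl _, hU, hpos⟩
    | succ k ih => rw [hMsucc]; exact hnext _ ih
  have hmono : ∀ i j, i ≤ j → M j ⊆ M i := by
    intro i j hij
    induction j with
    | zero => simp_all
    | succ k ih =>
      rcases Nat.lt_or_ge i (k+1) with h | h
      · have h1 : M (k+1) ⊆ M k := by rw [hMsucc]; exact Set.inter_subset_left
        exact h1.trans (ih (Nat.lt_succ_iff.mp h))
      · have : i = k + 1 := le_antisymm hij h
        rw [this]
  -- build the centered chain
  have hchain : ∀ i j, i < j → dist (y (M j)) (y (M i)) = s (M i) := by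
    intro i j hij
    have h1 : y (M j) ∈ M j := hy _ (hPM j)
    have h2 : M j ⊆ M (i + 1) := hmono _ _ hij
    have h3 : y (M j) ∈ Metric.sphere (y (M i)) (s (M i)) := by
      have := h2 h1
      rw [hMsucc] at this
      exact this.2
    exact Metric.mem_sphere.mp h3
  exact no_infinite_centered_chain (fun n => y (M n)) (fun n => s (M n))
    (fun n => hs _ (hPM n)) hchain

/-- Countably many disjoint measurable clean sets cover `ν`-almost everything. -/
lemma exists_clean_cover (ν : Measure E) [IsFiniteMeasure ν] :
    ∃ A : ℕ → Set E, (∀ n, MeasurableSet (A n)) ∧ (∀ n, NuClean ν (A n)) ∧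
      ν (⋃ n, A n)ᶜ = 0 := by
  -- greedy choice function: an (almost) maximal clean subset of any measurable set
  have pickspec : ∀ W : Set E, MeasurableSet W → ∃ A : Set E,
      A ⊆ W ∧ MeasurableSet A ∧ NuClean ν A ∧
      ∀ B, B ⊆ W → MeasurableSet B → NuClean ν B → ν B ≤ 2 * ν A := by
    intro W hW
    set c : ℝ≥0∞ := ⨆ (B : Set E) (_ : B ⊆ W ∧ MeasurableSet B ∧ NuClean ν B), ν B with hc
    have hle : ∀ B, B ⊆ W → MeasurableSet B → NuClean ν B → ν B ≤ c := by
      intro B h1 h2 h3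
      rw [hc]
      exact le_iSup₂ (f := fun (B : Set E) (_ : B ⊆ W ∧ MeasurableSet B ∧ NuClean ν B) => ν B)
        B ⟨h1, h2, h3⟩
    rcases eq_or_ne c 0 with h0 | h0
    · refine ⟨∅, Set.empty_subset _, MeasurableSet.empty, ?_, ?_⟩
      · intro x hx; exact absurd hx (Set.notMem_empty x)
      · intro B h1 h2 h3
        have := hle B h1 h2 h3
        rw [h0] at this
        simpa using this
    · have hctop : c ≠ ⊤ := by
        have : c ≤ ν Set.univ := by
          rw [hc]
          refine iSup₂_le ?_
          intro B _
          exact measure_mono (Set.subset_univ _)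
        exact ne_top_of_le_ne_top (measure_ne_top ν _) this
      have hhalf : c / 2 < c := ENNReal.half_lt_self h0 hctop
      rw [hc] at hhalf
      obtain ⟨B, hBc⟩ := lt_iSup_iff.mp hhalf
      obtain ⟨hB1, hBc'⟩ := lt_iSup_iff.mp hBc
      refine ⟨B, hB1.1, hB1.2.1, hB1.2.2, ?_⟩
      intro B' h1 h2 h3
      calc ν B' ≤ c := hle B' h1 h2 h3
      _ = 2 * (c / 2) := by
          rw [ENNReal.mul_div_cancel' (by norm_num) (by norm_num)]
      _ ≤ 2 * ν B := by
          exact mul_le_mul_right (le_of_lt hBc') 2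
  choose! pick hp1 hp2 hp3 hp4 using pickspec
  -- cumulative construction
  set v : ℕ → Set E := fun n => Nat.rec ∅ (fun _ vn => vn ∪ pick vnᶜ) n with hv
  set A : ℕ → Set E := fun n => pick (v n)ᶜ with hA
  have hvsucc : ∀ n, v (n + 1) = v n ∪ A n := fun n => rfl
  have hvmeas : ∀ n, MeasurableSet (v n) := by
    intro n
    induction n with
    | zero => exact MeasurableSet.empty
    | succ k ih => rw [hvsucc]; exact ih.union (hp2 _ ih.compl)
  have hAmeas : ∀ n, MeasurableSet (A n) := fun n => hp2 _ (hvmeas n).compl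
  have hAclean : ∀ n, NuClean ν (A n) := fun n => hp3 _ (hvmeas n).compl
  have hAv : ∀ n, A n ⊆ (v n)ᶜ := fun n => hp1 _ (hvmeas n).compl
  have hvmono : ∀ i j, i ≤ j → v i ⊆ v j := by
    intro i j hij
    induction j with
    | zero => simp_all
    | succ k ih =>
      rcases Nat.lt_or_ge i (k+1) with h | h
      · exact (ih (Nat.lt_succ_iff.mp h)).trans (by rw [hvsucc]; exact Set.subset_union_left)
      · have : i = k + 1 := le_antisymm hij h
        rw [this]
  have hAsubv : ∀ n, A n ⊆ v (n + 1) := by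
    intro n
    rw [hvsucc]
    exact Set.subset_union_right
  have hdisj : ∀ i j, i < j → Disjoint (A i) (A j) := by
    intro i j hij
    have h1 : A i ⊆ v j := (hAsubv i).trans (hvmono _ _ hij)
    have h2 : A j ⊆ (v j)ᶜ := hAv j
    exact Set.disjoint_of_subset h1 h2 disjoint_compl_right
  refine ⟨A, hAmeas, hAclean, ?_⟩
  by_contra hne
  have hpos : 0 < ν (⋃ n, A n)ᶜ := pos_iff_ne_zero.mpr hne
  obtain ⟨B, hBsub, hBmeas, hBpos, hBclean⟩ :=
    exists_clean_subset ν (MeasurableSet.compl (MeasurableSet.iUnion hAmeas)) hpos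
  -- B is available at every stage
  have hBn : ∀ n, ν B ≤ 2 * ν (A n) := by
    intro n
    refine hp4 _ (hvmeas n).compl B ?_ hBmeas hBclean
    have h1 : v n ⊆ ⋃ m, A m := by
      induction n with
      | zero => simp [hv]
      | succ k ih =>
        rw [hvsucc]
        exact Set.union_subset ih (Set.subset_iUnion A k)
    exact hBsub.trans (Set.compl_subset_compl.mpr h1)
  -- contradiction: infinitely many disjoint sets of definite mass
  have hsum : ∑' n, ν (A n) ≤ ν Set.univ := by
    rw [← measure_iUnion ?_ hAmeas]
    · exact measure_mono (Set.subset_univ _)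
    · intro i j hij
      rcases lt_or_gt_of_ne hij with h | h
      · exact hdisj i j h
      · exact (hdisj j i h).symm
  have hlow : ∀ n, ν B / 2 ≤ ν (A n) := by
    intro n
    rw [ENNReal.div_le_iff_le_mul (by norm_num) (by norm_num)]
    calc ν B ≤ 2 * ν (A n) := hBn n
    _ = ν (A n) * 2 := mul_comm _ _
  have htop : (∑' _ : ℕ, ν B / 2) ≤ ∑' n, ν (A n) := ENNReal.tsum_le_tsum hlow
  have hBhalf : ν B / 2 ≠ 0 := by
    simp only [ne_eq, ENNReal.div_eq_zero_iff]
    push_neg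
    exact ⟨pos_iff_ne_zero.mp hBpos, by norm_num⟩
  have htot : (∑' _ : ℕ, ν B / 2) = ⊤ := ENNReal.tsum_const_eq_top_of_ne_zero hBhalf
  have : (⊤ : ℝ≥0∞) ≤ ν Set.univ := htot ▸ htop.trans hsum
  exact absurd (lt_of_le_of_lt this (measure_lt_top ν _)) (lt_irrefl _)

/-- Almost every point has all its closed balls of positive measure. -/
lemma ae_closedBall_pos (ν : Measure E) :
    ∀ᵐ x ∂ν, ∀ r : ℝ, 0 < r → 0 < ν (Metric.closedBall x r) := by
  obtain ⟨D, hDc, hDd⟩ := TopologicalSpace.exists_countable_dense E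
  set V : Set E := ⋃ z ∈ D, ⋃ q : ℚ, ⋃ (_ : ν (Metric.ball z (q : ℝ)) = 0),
    Metric.ball z (q : ℝ) with hV
  have hVnull : ν V = 0 := by
    rw [hV]
    refine (measure_biUnion_null_iff hDc).mpr ?_
    intro z _
    refine (measure_iUnion_null_iff).mpr ?_
    intro q
    refine (measure_iUnion_null_iff).mpr ?_
    intro h
    exact h
  rw [ae_iff]
  refine measure_mono_null ?_ hVnull
  intro x hx
  simp only [Set.mem_setOf_eq] at hx
  push_neg at hx
  obtain ⟨r, hr, hball⟩ := hx
  have hball0 : ν (Metric.ball x r) = 0 := by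
    have h1 : ν (Metric.ball x r) ≤ ν (Metric.closedBall x r) :=
      measure_mono Metric.ball_subset_closedBall
    have h2 : ν (Metric.closedBall x r) = 0 := le_antisymm hball zero_le
    exact le_antisymm (h2 ▸ h1) zero_le
  obtain ⟨z, hzD, hzx⟩ := hDd.exists_dist_lt x (show (0:ℝ) < r/4 by linarith)
  obtain ⟨q, hq1, hq2⟩ := exists_rat_btwn (show r/4 < r/2 by linarith)
  have hsub : Metric.ball z (q : ℝ) ⊆ Metric.ball x r := by
    intro y hy
    rw [Metric.mem_ball] at hy ⊢
    have : dist y x ≤ dist y z + dist z x := dist_triangle _ _ _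
    rw [dist_comm z x] at this
    linarith
  have hzq : ν (Metric.ball z (q : ℝ)) = 0 :=
    le_antisymm (hball0 ▸ measure_mono hsub) zero_le
  rw [hV]
  refine Set.mem_biUnion hzD ?_
  refine Set.mem_iUnion.mpr ⟨q, ?_⟩
  refine Set.mem_iUnion.mpr ⟨hzq, ?_⟩
  rw [Metric.mem_ball]
  linarith

end Aux

/-- For a Borel probability measure `ν` on `ℝ^d` (formalized as a finite-dimensional real
normed space, so that balls and spheres are taken with respect to an arbitrary norm),
for `ν`-a.e. `x` all closed balls around `x` have positive measure and the ratio
`ν(S_r(x))/ν(B̄_r(x))` of the measure of the sphere to that of the closed ball tends to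
`0` as `r ↘ 0`. -/
theorem sphere_ball_ratio_tendsto_zero {E : Type*} [NormedAddCommGroup E]
    [NormedSpace ℝ E] [FiniteDimensional ℝ E] [MeasurableSpace E] [BorelSpace E]
    (ν : Measure E) [IsProbabilityMeasure ν] :
    ∀ᵐ x ∂ν,
      (∀ r : ℝ, 0 < r → 0 < ν (Metric.closedBall x r)) ∧
      Tendsto (fun r : ℝ => ν (Metric.sphere x r) / ν (Metric.closedBall x r))
        (nhdsWithin 0 (Set.Ioi 0)) (nhds 0) := by
  obtain ⟨A, hAmeas, hAclean, hAcover⟩ := exists_clean_cover ν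
  have hdens : ∀ n : ℕ, ∀ᵐ x ∂ν,
      Tendsto (fun r => ν ((A n)ᶜ ∩ Metric.closedBall x r) / ν (Metric.closedBall x r))
        (nhdsWithin 0 (Set.Ioi 0)) (nhds ((A n)ᶜ.indicator 1 x)) := fun n =>
    Besicovitch.ae_tendsto_measure_inter_div_of_measurableSet ν (hAmeas n).compl
  have hcov : ∀ᵐ x ∂ν, x ∈ ⋃ n, A n := by
    rw [ae_iff]
    refine measure_mono_null ?_ hAcover
    intro x hx
    simpa using hx
  filter_upwards [ae_closedBall_pos ν, hcov, ae_all_iff.mpr hdens] with x hpos hx hdx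
  refine ⟨hpos, ?_⟩
  obtain ⟨n, hn⟩ := Set.mem_iUnion.mp hx
  have hind : (A n)ᶜ.indicator (1 : E → ℝ≥0∞) x = 0 :=
    Set.indicator_of_notMem (by simpa using hn) _
  have hupper := hdx n
  rw [hind] at hupper
  refine tendsto_of_tendsto_of_tendsto_of_le_of_le' tendsto_const_nhds hupper ?_ ?_
  · exact Eventually.of_forall fun r => zero_le
  · filter_upwards [self_mem_nhdsWithin] with r hr
    have hr' : (0:ℝ) < r := hr
    have hnum : ν (Metric.sphere x r) ≤ ν ((A n)ᶜ ∩ Metric.closedBall x r) := by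
      have hsplit : ν (Metric.sphere x r ∩ A n) + ν (Metric.sphere x r \ A n)
          = ν (Metric.sphere x r) := measure_inter_add_diff _ (hAmeas n)
      have hz : ν (Metric.sphere x r ∩ A n) = 0 := by
        rw [Set.inter_comm]
        exact hAclean n x hn r hr'
      have hsub : Metric.sphere x r \ A n ⊆ (A n)ᶜ ∩ Metric.closedBall x r := by
        intro y hy
        exact ⟨hy.2, Metric.sphere_subset_closedBall hy.1⟩
      calc ν (Metric.sphere x r) = ν (Metric.sphere x r ∩ A n) + ν (Metric.sphere x r \ A n) :=
            hsplit.symm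
      _ = ν (Metric.sphere x r \ A n) := by rw [hz, zero_add]
      _ ≤ ν ((A n)ᶜ ∩ Metric.closedBall x r) := measure_mono hsub
    exact ENNReal.div_le_div_right hnum _
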